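/- Let θ ∈ (0, π/2) and define γ : (0, π) → ℝ³ by γ(s) = (sin θ·sin s·cos(cot θ·ln(tan(s/2))), sin θ·sin s·sin(cot θ·ln(tan(s/2))), −sin θ·cos s). Then the curvature and torsion of γ satisfy κ(s) = ‖γ''(s)‖ = √(1 − sin²θ·cos²s)/(sin θ·sin s) and τ(s) = det(γ'(s), γ''(s), γ'''(s))/‖γ''(s)‖² = cos θ/(1 − sin²θ·cos²s) for all s ∈ (0, π). In particular the ratio τ/κ is not constant, so γ does not satisfy the Lancret relation. -/

import Mathlib

open Real
open scoped RealInnerProductSpace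

/-- A point/vector of Euclidean 3-space. -/
noncomputable def v3 (x y z : ℝ) : EuclideanSpace ℝ (Fin 3) := WithLp.toLp 2 ![x, y, z]

/-- Determinant of the 3×3 matrix with rows u, v, w. -/
noncomputable def det3 (u v w : EuclideanSpace ℝ (Fin 3)) : ℝ :=
  Matrix.det !![u 0, u 1, u 2; v 0, v 1, v 2; w 0, w 1, w 2]


set_option linter.unusedSectionVars false

lemma hasDerivAt_v3 {x y z : ℝ → ℝ} {x' y' z' s : ℝ}
    (hx : HasDerivAt x x' s) (hy : HasDerivAt y y' s) (hz : HasDerivAt z z' s) :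
    HasDerivAt (fun t => v3 (x t) (y t) (z t)) (v3 x' y' z') s := by
  have hp : HasDerivAt (fun t => (![x t, y t, z t] : Fin 3 → ℝ)) ![x', y', z'] s :=
    hasDerivAt_pi.2 (by intro i; fin_cases i <;> simpa)
  have h2 := (((PiLp.continuousLinearEquiv 2 ℝ (fun _ : Fin 3 => ℝ)).symm :
      (Fin 3 → ℝ) →L[ℝ] EuclideanSpace ℝ (Fin 3))).hasFDerivAt.comp_hasDerivAt s hp
  exact h2

noncomputable def ph (θ s : ℝ) : ℝ := Real.cot θ * Real.log (Real.tan (s / 2))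

section
variable (θ : ℝ)

/-- first derivative components -/
noncomputable def F1x (s : ℝ) : ℝ :=
  sin θ * (cos s * cos (ph θ s) - cot θ * sin (ph θ s))
noncomputable def F1y (s : ℝ) : ℝ :=
  sin θ * (cos s * sin (ph θ s) + cot θ * cos (ph θ s))
noncomputable def F1z (s : ℝ) : ℝ := sin θ * sin s

/-- second derivative components -/
noncomputable def F2x (s : ℝ) : ℝ :=
  sin θ * (-(sin s * cos (ph θ s)) -
    (cos s * sin (ph θ s) + cot θ * cos (ph θ s)) * (cot θ / sin s))
noncomputable def F2y (s : ℝ) : ℝ :=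
  sin θ * (-(sin s * sin (ph θ s)) +
    (cos s * cos (ph θ s) - cot θ * sin (ph θ s)) * (cot θ / sin s))
noncomputable def F2z (s : ℝ) : ℝ := sin θ * cos s

/-- third derivative components -/
noncomputable def F3x (s : ℝ) : ℝ :=
  sin θ * (-(cos s * cos (ph θ s)) + sin s * sin (ph θ s) * (cot θ / sin s)
    - (-(sin s * sin (ph θ s)) + (cos s * cos (ph θ s) - cot θ * sin (ph θ s)) * (cot θ / sin s))
        * (cot θ / sin s)
    - (cos s * sin (ph θ s) + cot θ * cos (ph θ s)) * (-(cot θ * cos s / sin s ^ 2)))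
noncomputable def F3y (s : ℝ) : ℝ :=
  sin θ * (-(cos s * sin (ph θ s)) - sin s * cos (ph θ s) * (cot θ / sin s)
    + (-(sin s * cos (ph θ s)) - (cos s * sin (ph θ s) + cot θ * cos (ph θ s)) * (cot θ / sin s))
        * (cot θ / sin s)
    + (cos s * cos (ph θ s) - cot θ * sin (ph θ s)) * (-(cot θ * cos s / sin s ^ 2)))
noncomputable def F3z (s : ℝ) : ℝ := -(sin θ * sin s)

end

section
variable {θ s : ℝ} (hs : s ∈ Set.Ioo (0 : ℝ) Real.pi)
include hs

lemma sin_s_pos : 0 < sin s := Real.sin_pos_of_pos_of_lt_pi hs.1 hs.2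

lemma cos_half_pos : 0 < cos (s / 2) :=
  Real.cos_pos_of_mem_Ioo ⟨by nlinarith [hs.1, Real.pi_pos], by nlinarith [hs.2]⟩

lemma sin_half_pos : 0 < sin (s / 2) :=
  Real.sin_pos_of_pos_of_lt_pi (by linarith [hs.1]) (by nlinarith [hs.2, Real.pi_pos])

lemma tan_half_pos : 0 < tan (s / 2) := by
  rw [Real.tan_eq_sin_div_cos]
  exact div_pos (sin_half_pos hs) (cos_half_pos hs)

lemma sin_eq_double : sin s = 2 * sin (s / 2) * cos (s / 2) := by
  rw [← Real.sin_two_mul]; congr 1; ring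

lemma hasDerivAt_L : HasDerivAt (fun t => log (tan (t / 2))) (1 / sin s) s := by
  have h1 : HasDerivAt (fun t : ℝ => t / 2) (1 / 2) s := by
    simpa using (hasDerivAt_id s).div_const 2
  have h2 := (Real.hasDerivAt_tan (ne_of_gt (cos_half_pos hs))).comp s h1
  have h3 := (Real.hasDerivAt_log (ne_of_gt (tan_half_pos hs))).comp s h2
  refine h3.congr_deriv ?_
  rw [Real.tan_eq_sin_div_cos, sin_eq_double hs]
  have c1 := ne_of_gt (cos_half_pos hs)
  have c2 := ne_of_gt (sin_half_pos hs)
  field_simp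

lemma hasDerivAt_ph : HasDerivAt (ph θ) (cot θ / sin s) s := by
  exact ((hasDerivAt_L hs).const_mul (cot θ)).congr_deriv (by rw [mul_one_div])

lemma hasDerivAt_cos_ph :
    HasDerivAt (fun t => cos (ph θ t)) (-sin (ph θ s) * (cot θ / sin s)) s :=
  (Real.hasDerivAt_cos (ph θ s)).comp s (hasDerivAt_ph hs)

lemma hasDerivAt_sin_ph :
    HasDerivAt (fun t => sin (ph θ t)) (cos (ph θ s) * (cot θ / sin s)) s :=
  (Real.hasDerivAt_sin (ph θ s)).comp s (hasDerivAt_ph hs)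

lemma hasDerivAt_u :
    HasDerivAt (fun t => cot θ / sin t) (-(cot θ * cos s / sin s ^ 2)) s := by
  have := (hasDerivAt_const s (cot θ)).div (Real.hasDerivAt_sin s) (ne_of_gt (sin_s_pos hs))
  refine this.congr_deriv ?_; ring

lemma hasDerivAt_g1 (θ : ℝ) :
    HasDerivAt (fun t => v3 (sin θ * sin t * cos (ph θ t)) (sin θ * sin t * sin (ph θ t))
      (-(sin θ * cos t))) (v3 (F1x θ s) (F1y θ s) (F1z θ s)) s := by
  have hss := ne_of_gt (sin_s_pos hs)
  refine hasDerivAt_v3 ?_ ?_ ?_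
  · have := (((Real.hasDerivAt_sin s).const_mul (sin θ)).mul (hasDerivAt_cos_ph (θ := θ) hs))
    refine this.congr_deriv ?_
    simp only [F1x]; field_simp; ring
  · have := (((Real.hasDerivAt_sin s).const_mul (sin θ)).mul (hasDerivAt_sin_ph (θ := θ) hs))
    refine this.congr_deriv ?_
    simp only [F1y]; field_simp
  · have := ((Real.hasDerivAt_cos s).const_mul (sin θ)).neg
    refine this.congr_deriv ?_
    simp only [F1z]; ring

lemma hasDerivAt_g2 (θ : ℝ) :
    HasDerivAt (fun t => v3 (F1x θ t) (F1y θ t) (F1z θ t))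
      (v3 (F2x θ s) (F2y θ s) (F2z θ s)) s := by
  have hss := ne_of_gt (sin_s_pos hs)
  refine hasDerivAt_v3 ?_ ?_ ?_
  · have := (((Real.hasDerivAt_cos s).mul (hasDerivAt_cos_ph (θ := θ) hs)).sub
      ((hasDerivAt_sin_ph (θ := θ) hs).const_mul (cot θ))).const_mul (sin θ)
    refine this.congr_deriv ?_
    simp only [F2x]; ring
  · have := (((Real.hasDerivAt_cos s).mul (hasDerivAt_sin_ph (θ := θ) hs)).add
      ((hasDerivAt_cos_ph (θ := θ) hs).const_mul (cot θ))).const_mul (sin θ)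
    refine this.congr_deriv ?_
    simp only [F2y]; ring
  · have := (Real.hasDerivAt_sin s).const_mul (sin θ)
    refine this.congr_deriv ?_ <;> simp [F1z, F2z]
lemma hasDerivAt_g3 (θ : ℝ) :
    HasDerivAt (fun t => v3 (F2x θ t) (F2y θ t) (F2z θ t))
      (v3 (F3x θ s) (F3y θ s) (F3z θ s)) s := by
  have hss := ne_of_gt (sin_s_pos hs)
  refine hasDerivAt_v3 ?_ ?_ ?_
  · have := ((((Real.hasDerivAt_sin s).mul (hasDerivAt_cos_ph (θ := θ) hs)).neg).sub
      ((((Real.hasDerivAt_cos s).mul (hasDerivAt_sin_ph (θ := θ) hs)).add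
        ((hasDerivAt_cos_ph (θ := θ) hs).const_mul (cot θ))).mul (hasDerivAt_u (θ := θ) hs))).const_mul (sin θ)
    refine this.congr_deriv ?_
    simp only [F3x, Pi.mul_apply, Pi.add_apply, Pi.sub_apply]; ring
  · have := ((((Real.hasDerivAt_sin s).mul (hasDerivAt_sin_ph (θ := θ) hs)).neg).add
      ((((Real.hasDerivAt_cos s).mul (hasDerivAt_cos_ph (θ := θ) hs)).sub
        ((hasDerivAt_sin_ph (θ := θ) hs).const_mul (cot θ))).mul (hasDerivAt_u (θ := θ) hs))).const_mul (sin θ)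
    refine this.congr_deriv ?_
    simp only [F3y, Pi.mul_apply, Pi.add_apply, Pi.sub_apply]; ring
  · have := (Real.hasDerivAt_cos s).const_mul (sin θ)
    refine this.congr_deriv ?_ <;> simp [F2z, F3z]

end

lemma key_norm (st ct sp cp ss cs : ℝ) (hst : st ≠ 0) (hss : ss ≠ 0)
    (e1 : st ^ 2 + ct ^ 2 = 1) (e2 : ss ^ 2 + cs ^ 2 = 1) (e3 : sp ^ 2 + cp ^ 2 = 1) :
    (st * (-(ss * cp) - (cs * sp + (ct / st) * cp) * ((ct / st) / ss))) ^ 2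
    + (st * (-(ss * sp) + (cs * cp - (ct / st) * sp) * ((ct / st) / ss))) ^ 2
    + (st * cs) ^ 2 = (1 - st ^ 2 * cs ^ 2) / (st * ss) ^ 2 := by
  field_simp
  linear_combination ((2 : ℝ) * st ^ 2 * cp ^ 2 * ss ^ 2 + (2 : ℝ) * st ^ 2 * sp ^ 2 * ss ^ 2 + (1 : ℝ) * st ^ 2 * cp ^ 2 * cs ^ 2 + (1 : ℝ) * st ^ 2 * sp ^ 2 * cs ^ 2 + (1 : ℝ) * ct ^ 2 * cp ^ 2 + (1 : ℝ) * ct ^ 2 * sp ^ 2 + (-1 : ℝ) * st ^ 2 * cp ^ 2 + (1 : ℝ) * cp ^ 2 + (-1 : ℝ) * st ^ 2 * sp ^ 2 + (1 : ℝ) * sp ^ 2) * e1 + ((1 : ℝ) * st ^ 2 + (1 : ℝ) * st ^ 4 * ss ^ 2 + (-1 : ℝ) * st ^ 4 * cp ^ 2 + (1 : ℝ) * st ^ 2 * cp ^ 2 + (-1 : ℝ) * st ^ 4 * sp ^ 2 + (1 : ℝ) * st ^ 2 * sp ^ 2) * e2 + ((1 : ℝ) * st ^ 4 * ss ^ 4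 + (-1 : ℝ) * st ^ 4 * ss ^ 2 + (1 : ℝ) * st ^ 2 * ss ^ 2 + (-1 : ℝ) * st ^ 2 + (1 : ℝ)) * e3


lemma key_det (st ct sp cp ss cs : ℝ) (hst : st ≠ 0) (hss : ss ≠ 0)
    (e1 : st ^ 2 + ct ^ 2 = 1) (e2 : ss ^ 2 + cs ^ 2 = 1) (e3 : sp ^ 2 + cp ^ 2 = 1) :
    (st * (cs * cp - (ct / st) * sp)) *
      ((st * (-(ss * sp) + (cs * cp - (ct / st) * sp) * ((ct / st) / ss))) * (-(st * ss))
        - (st * cs) * (st * (-(cs * sp) - ss * cp * ((ct / st) / ss)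
            + (-(ss * cp) - (cs * sp + (ct / st) * cp) * ((ct / st) / ss)) * ((ct / st) / ss)
            + (cs * cp - (ct / st) * sp) * (-((ct / st) * cs / ss ^ 2)))))
    - (st * (cs * sp + (ct / st) * cp)) *
      ((st * (-(ss * cp) - (cs * sp + (ct / st) * cp) * ((ct / st) / ss))) * (-(st * ss))
        - (st * cs) * (st * (-(cs * cp) + ss * sp * ((ct / st) / ss)
            - (-(ss * sp) + (cs * cp - (ct / st) * sp) * ((ct / st) / ss)) * ((ct / st) / ss)
            - (cs * sp + (ct / st) * cp) * (-((ct / st) * cs / ss ^ 2)))))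
    + (st * ss) *
      ((st * (-(ss * cp) - (cs * sp + (ct / st) * cp) * ((ct / st) / ss))) *
          (st * (-(cs * sp) - ss * cp * ((ct / st) / ss)
            + (-(ss * cp) - (cs * sp + (ct / st) * cp) * ((ct / st) / ss)) * ((ct / st) / ss)
            + (cs * cp - (ct / st) * sp) * (-((ct / st) * cs / ss ^ 2))))
        - (st * (-(ss * sp) + (cs * cp - (ct / st) * sp) * ((ct / st) / ss))) *
          (st * (-(cs * cp) + ss * sp * ((ct / st) / ss)
            - (-(ss * sp) + (cs * cp - (ct / st) * sp) * ((ct / st) / ss)) * ((ct / st) / ss)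
            - (cs * sp + (ct / st) * cp) * (-((ct / st) * cs / ss ^ 2)))))
    = ct / (st * ss) ^ 2 := by
  field_simp
  linear_combination ((2 : ℝ) * st ^ 2 * ct ^ 1 * cp ^ 2 * cs ^ 2 + (2 : ℝ) * st ^ 2 * ct ^ 1 * sp ^ 2 * cs ^ 2 + (2 : ℝ) * st ^ 2 * ct ^ 1 * cp ^ 2 * ss ^ 2 + (2 : ℝ) * st ^ 2 * ct ^ 1 * sp ^ 2 * ss ^ 2 + (1 : ℝ) * ct ^ 3 * cp ^ 2 + (1 : ℝ) * ct ^ 3 * sp ^ 2 + (-1 : ℝ) * st ^ 2 * ct ^ 1 * cp ^ 2 + (1 : ℝ) * ct ^ 1 * cp ^ 2 + (-1 : ℝ) * st ^ 2 * ct ^ 1 * sp ^ 2 + (1 : ℝ) * ct ^ 1 * sp ^ 2) * e1 + ((1 : ℝ) * st ^ 4 * ct ^ 1 * cp ^ 2 * ss ^ 2 + (1 : ℝ) * st ^ 4 * ct ^ 1 * sp ^ 2 * ss ^ 2 + (1 : ℝ) * st ^ 4 * ct ^ 1 * cp ^ 2 * cs ^ 2 + (1 : ℝ) * st ^ 4 *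 ct ^ 1 * sp ^ 2 * cs ^ 2 + (-1 : ℝ) * st ^ 4 * ct ^ 1 * cp ^ 2 + (2 : ℝ) * st ^ 2 * ct ^ 1 * cp ^ 2 + (-1 : ℝ) * st ^ 4 * ct ^ 1 * sp ^ 2 + (2 : ℝ) * st ^ 2 * ct ^ 1 * sp ^ 2) * e2 + ((1 : ℝ) * ct ^ 1) * e3

lemma norm_v3 (x y z : ℝ) : ‖v3 x y z‖ = Real.sqrt (x ^ 2 + y ^ 2 + z ^ 2) := by
  rw [EuclideanSpace.norm_eq]
  congr 1
  simp [v3, Fin.sum_univ_three, Real.norm_eq_abs, sq_abs]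

lemma det3_v3 (a b c d e f g h i : ℝ) :
    det3 (v3 a b c) (v3 d e f) (v3 g h i)
      = a * (e * i - f * h) - b * (d * i - f * g) + c * (d * h - e * g) := by
  simp [det3, v3, Matrix.det_fin_three]; ring

/-- The spherical curve (ω(s) = s) has curvature
√(1 − sin²θ cos²s)/(sin θ sin s) and torsion cos θ/(1 − sin²θ cos²s) on (0, π);
in particular the ratio τ/κ is not constant, so the Lancret relation fails. -/
theorem stmt_7 (θ : ℝ) (hθ : θ ∈ Set.Ioo 0 (Real.pi / 2))
    (γ : ℝ → EuclideanSpace ℝ (Fin 3))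
    (hγ : γ = fun s => v3
      (Real.sin θ * Real.sin s * Real.cos (Real.cot θ * Real.log (Real.tan (s / 2))))
      (Real.sin θ * Real.sin s * Real.sin (Real.cot θ * Real.log (Real.tan (s / 2))))
      (-(Real.sin θ * Real.cos s)))
    (κ τ : ℝ → ℝ)
    (hκ : ∀ s, κ s = ‖deriv (deriv γ) s‖)
    (hτ : ∀ s, τ s = det3 (deriv γ s) (deriv (deriv γ) s) (deriv (deriv (deriv γ)) s)
        / ‖deriv (deriv γ) s‖ ^ 2) :
    (∀ s ∈ Set.Ioo (0 : ℝ) Real.pi,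
      κ s = Real.sqrt (1 - Real.sin θ ^ 2 * Real.cos s ^ 2) / (Real.sin θ * Real.sin s) ∧
      τ s = Real.cos θ / (1 - Real.sin θ ^ 2 * Real.cos s ^ 2)) ∧
    ¬ ∃ a : ℝ, ∀ s ∈ Set.Ioo (0 : ℝ) Real.pi, τ s = a * κ s := by
  obtain ⟨hθ0, hθ1⟩ := hθ
  have hpi := Real.pi_pos
  have hsθ : 0 < sin θ := Real.sin_pos_of_pos_of_lt_pi hθ0 (by linarith)
  have hcθ : 0 < cos θ := Real.cos_pos_of_mem_Ioo ⟨by linarith, hθ1⟩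
  have hcot : Real.cot θ = cos θ / sin θ := Real.cot_eq_cos_div_sin θ
  have h1 : ∀ t ∈ Set.Ioo (0 : ℝ) Real.pi,
      HasDerivAt γ (v3 (F1x θ t) (F1y θ t) (F1z θ t)) t := by
    intro t ht
    rw [hγ]
    simpa [ph] using hasDerivAt_g1 ht θ
  have hd1 : ∀ t ∈ Set.Ioo (0 : ℝ) Real.pi,
      deriv γ t = v3 (F1x θ t) (F1y θ t) (F1z θ t) := fun t ht => (h1 t ht).deriv
  have hd2 : ∀ t ∈ Set.Ioo (0 : ℝ) Real.pi,
      deriv (deriv γ) t = v3 (F2x θ t) (F2y θ t) (F2z θ t) := by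
    intro t ht
    have heq : deriv γ =ᶠ[nhds t] fun u => v3 (F1x θ u) (F1y θ u) (F1z θ u) := by
      filter_upwards [isOpen_Ioo.mem_nhds ht] with u hu using hd1 u hu
    rw [heq.deriv_eq]
    exact (hasDerivAt_g2 ht θ).deriv
  have hd3 : ∀ t ∈ Set.Ioo (0 : ℝ) Real.pi,
      deriv (deriv (deriv γ)) t = v3 (F3x θ t) (F3y θ t) (F3z θ t) := by
    intro t ht
    have heq : deriv (deriv γ) =ᶠ[nhds t] fun u => v3 (F2x θ u) (F2y θ u) (F2z θ u) := by
      filter_upwards [isOpen_Ioo.mem_nhds ht] with u hu using hd2 u hu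
    rw [heq.deriv_eq]
    exact (hasDerivAt_g3 ht θ).deriv
  have hmain : ∀ s ∈ Set.Ioo (0 : ℝ) Real.pi,
      κ s = Real.sqrt (1 - Real.sin θ ^ 2 * Real.cos s ^ 2) / (Real.sin θ * Real.sin s) ∧
      τ s = Real.cos θ / (1 - Real.sin θ ^ 2 * Real.cos s ^ 2) := by
    intro s hsI
    have hss : 0 < sin s := sin_s_pos hsI
    have hx : 0 < 1 - sin θ ^ 2 * cos s ^ 2 := by
      nlinarith [Real.sin_sq_add_cos_sq θ, Real.cos_sq_le_one s, sq_nonneg (sin θ),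
        mul_pos hcθ hcθ]
    have hnormsq : F2x θ s ^ 2 + F2y θ s ^ 2 + F2z θ s ^ 2
        = (1 - sin θ ^ 2 * cos s ^ 2) / (sin θ * sin s) ^ 2 := by
      simp only [F2x, F2y, F2z, hcot]
      linear_combination key_norm (sin θ) (cos θ) (sin (ph θ s)) (cos (ph θ s)) (sin s) (cos s)
        hsθ.ne' hss.ne' (Real.sin_sq_add_cos_sq θ) (Real.sin_sq_add_cos_sq s)
        (Real.sin_sq_add_cos_sq (ph θ s))
    have hsq : (1 - sin θ ^ 2 * cos s ^ 2) / (sin θ * sin s) ^ 2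
        = (Real.sqrt (1 - sin θ ^ 2 * cos s ^ 2) / (sin θ * sin s)) ^ 2 := by
      rw [div_pow, Real.sq_sqrt hx.le]
    have hnorm : ‖v3 (F2x θ s) (F2y θ s) (F2z θ s)‖
        = Real.sqrt (1 - sin θ ^ 2 * cos s ^ 2) / (sin θ * sin s) := by
      rw [norm_v3, hnormsq, hsq, Real.sqrt_sq (by positivity)]
    refine ⟨by rw [hκ s, hd2 s hsI, hnorm], ?_⟩
    have hdet : det3 (v3 (F1x θ s) (F1y θ s) (F1z θ s)) (v3 (F2x θ s) (F2y θ s) (F2z θ s))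
        (v3 (F3x θ s) (F3y θ s) (F3z θ s)) = cos θ / (sin θ * sin s) ^ 2 := by
      rw [det3_v3]
      simp only [F1x, F1y, F1z, F2x, F2y, F2z, F3x, F3y, F3z, hcot]
      linear_combination key_det (sin θ) (cos θ) (sin (ph θ s)) (cos (ph θ s)) (sin s) (cos s)
        hsθ.ne' hss.ne' (Real.sin_sq_add_cos_sq θ) (Real.sin_sq_add_cos_sq s)
        (Real.sin_sq_add_cos_sq (ph θ s))
    rw [hτ s, hd1 s hsI, hd2 s hsI, hd3 s hsI, hdet, hnorm, ← hsq, ← hnormsq, hnormsq]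
    rw [div_div_div_cancel_right₀]
    · exact (pow_ne_zero 2 (by positivity))
  refine ⟨hmain, ?_⟩
  rintro ⟨a, ha⟩
  have key : ∀ s ∈ Set.Ioo (0 : ℝ) Real.pi,
      Real.cos θ / (1 - Real.sin θ ^ 2 * Real.cos s ^ 2)
        = a * (Real.sqrt (1 - Real.sin θ ^ 2 * Real.cos s ^ 2) / (Real.sin θ * Real.sin s)) := by
    intro s hs
    rw [← (hmain s hs).1, ← (hmain s hs).2]
    exact ha s hs
  have h2m : (Real.pi / 2) ∈ Set.Ioo (0 : ℝ) Real.pi := ⟨by linarith, by linarith⟩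
  have h4m : (Real.pi / 4) ∈ Set.Ioo (0 : ℝ) Real.pi := ⟨by linarith, by linarith⟩
  have h3m : (Real.pi / 3) ∈ Set.Ioo (0 : ℝ) Real.pi := ⟨by linarith, by linarith⟩
  have e2 := key _ h2m
  simp [Real.cos_pi_div_two, Real.sin_pi_div_two] at e2
  have ha' : a = sin θ * cos θ := by
    field_simp at e2
    linarith
  set t : ℝ := sin θ ^ 2 with ht
  have ht1 : t < 1 := by nlinarith [Real.sin_sq_add_cos_sq θ]
  have ht0 : 0 < t := by positivity
  -- point pi/4
  have hc4 : Real.cos (Real.pi / 4) ^ 2 = 1 / 2 := by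
    rw [Real.cos_pi_div_four, div_pow, Real.sq_sqrt (by norm_num : (0:ℝ) ≤ 2)]; norm_num
  have e4 := key _ h4m
  rw [hc4, Real.sin_pi_div_four] at e4
  have hP : 0 < 1 - t * (1/2) := by linarith
  have hP3 : (1 - t * (1/2)) ^ 3 = 1 / 2 := by
    set P := 1 - t * (1/2) with hPdef
    have hr : Real.sqrt P ^ 2 = P := Real.sq_sqrt hP.le
    have hq2 : (Real.sqrt 2 / 2) ^ 2 = 1 / 2 := by
      rw [div_pow, Real.sq_sqrt (by norm_num : (0:ℝ) ≤ 2)]; norm_num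
    have e4' : cos θ * (sin θ * (Real.sqrt 2 / 2)) = a * Real.sqrt P * P := by
      rw [mul_div_assoc'] at e4
      rw [div_eq_div_iff (by positivity) (by positivity)] at e4
      linarith [e4]
    have hcancel : Real.sqrt P * P = Real.sqrt 2 / 2 := by
      apply mul_left_cancel₀ (mul_ne_zero hsθ.ne' hcθ.ne')
      rw [ha'] at e4'
      linear_combination -e4'
    calc P ^ 3 = (Real.sqrt P * P) ^ 2 := by rw [mul_pow, hr]; ring
      _ = (Real.sqrt 2 / 2) ^ 2 := by rw [hcancel]
      _ = 1 / 2 := hq2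
  -- point pi/3
  have hc3 : Real.cos (Real.pi / 3) ^ 2 = 1 / 4 := by
    rw [Real.cos_pi_div_three]; norm_num
  have e3 := key _ h3m
  rw [hc3, Real.sin_pi_div_three] at e3
  have hQ : 0 < 1 - t * (1/4) := by linarith
  have hQ3 : (1 - t * (1/4)) ^ 3 = 3 / 4 := by
    set Q := 1 - t * (1/4) with hQdef
    have hr : Real.sqrt Q ^ 2 = Q := Real.sq_sqrt hQ.le
    have hq2 : (Real.sqrt 3 / 2) ^ 2 = 3 / 4 := by
      rw [div_pow, Real.sq_sqrt (by norm_num : (0:ℝ) ≤ 3)]; norm_num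
    have e3' : cos θ * (sin θ * (Real.sqrt 3 / 2)) = a * Real.sqrt Q * Q := by
      rw [mul_div_assoc'] at e3
      rw [div_eq_div_iff (by positivity) (by positivity)] at e3
      linarith [e3]
    have hcancel : Real.sqrt Q * Q = Real.sqrt 3 / 2 := by
      apply mul_left_cancel₀ (mul_ne_zero hsθ.ne' hcθ.ne')
      rw [ha'] at e3'
      linear_combination -e3'
    calc Q ^ 3 = (Real.sqrt Q * Q) ^ 2 := by rw [mul_pow, hr]; ring
      _ = (Real.sqrt 3 / 2) ^ 2 := by rw [hcancel]
      _ = 3 / 4 := hq2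
  have hcontra : (0 : ℝ) = 1 := by
    linear_combination (-(218/9 : ℝ) + (58/9 : ℝ) * t - (5/9 : ℝ) * t ^ 2) * hP3
      + ((400/9 : ℝ) - (224/9 : ℝ) * t + (40/9 : ℝ) * t ^ 2) * hQ3
  exact absurd hcontra (by norm_num)
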